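/- Let G be a finite simple graph with clique vertex partition π and G^π the associated clique-whiskered graph, with vertices ordered by w_{11} > w_{12} > … > w_{1r_1} > v_1 > w_{21} > … > v_{t−1} > w_{t1} > … > w_{t r_t} > v_t. Then for every minimal vertex cover C of G^π, the colon ideal ⟨X_{C'} : C' a minimal vertex cover of G^π with X_{C'} > X_C in the induced lexicographic order⟩ : X_C equals the ideal generated by the variables {x_a : a ∈ ⋃_{i=1}^t (N_{G^π}(v_i) \ C)}. -/

import Mathlib

open scoped Classical

namespace PaperHS

/-- A set of vertices is a vertex cover of a simple graph if it meets every edge. -/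
def IsVertexCover {U : Type*} (H : SimpleGraph U) (C : Set U) : Prop :=
  ∀ ⦃a b : U⦄, H.Adj a b → a ∈ C ∨ b ∈ C

/-- A vertex cover is minimal if no proper subset is a vertex cover. -/
def IsMinVertexCover {U : Type*} (H : SimpleGraph U) (C : Set U) : Prop :=
  IsVertexCover H C ∧ ∀ D : Set U, D ⊂ C → ¬ IsVertexCover H D

/-- The clique-whiskered graph `G^π`. -/
def cliqueWhisker {V ι : Type*} (G : SimpleGraph V) (A : ι → Set V) :
    SimpleGraph (V ⊕ ι) :=
  SimpleGraph.fromRel (fun x y =>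
    match x, y with
    | Sum.inl a, Sum.inl b => G.Adj a b
    | Sum.inl a, Sum.inr i => a ∈ A i
    | _, _ => False)

/-- `lexGT lt C D` says the squarefree monomial `X_C` is strictly greater than
`X_D` in the lexicographic order induced by the variable order in which `x` is a
bigger variable than `y` whenever `lt y x`. -/
def lexGT {U : Type*} (lt : U → U → Prop) (C D : Finset U) : Prop :=
  ∃ z ∈ C, z ∉ D ∧ ∀ y : U, lt z y → (y ∈ C ↔ y ∈ D)

section helpers
variable {V ι : Type*} {G : SimpleGraph V} {A : ι → Set V}

lemma adj_inl_inl {a b : V} :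
    (cliqueWhisker G A).Adj (Sum.inl a) (Sum.inl b) ↔ G.Adj a b := by
  rw [cliqueWhisker, SimpleGraph.fromRel_adj]
  constructor
  · rintro ⟨-, h | h⟩
    · exact h
    · exact h.symm
  · intro h
    exact ⟨fun he => h.ne (Sum.inl.inj he), Or.inl h⟩

lemma adj_inl_inr {a : V} {i : ι} :
    (cliqueWhisker G A).Adj (Sum.inl a) (Sum.inr i) ↔ a ∈ A i := by
  rw [cliqueWhisker, SimpleGraph.fromRel_adj]
  constructor
  · rintro ⟨-, h | h⟩
    · exact h
    · exact h.elim
  · intro h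
    exact ⟨by simp, Or.inl h⟩

lemma not_adj_inr_inr {i j : ι} :
    ¬ (cliqueWhisker G A).Adj (Sum.inr i) (Sum.inr j) := by
  rw [cliqueWhisker, SimpleGraph.fromRel_adj]
  rintro ⟨-, h | h⟩
  · exact h
  · exact h

lemma adj_inr_iff {i : ι} {y : V ⊕ ι} :
    (cliqueWhisker G A).Adj (Sum.inr i) y ↔ ∃ a, y = Sum.inl a ∧ a ∈ A i := by
  cases y with
  | inl a =>
    rw [SimpleGraph.adj_comm, adj_inl_inr]
    constructor
    · intro h; exact ⟨a, rfl, h⟩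
    · rintro ⟨b, hb, h⟩; cases hb; exact h
  | inr j =>
    simp only [not_adj_inr_inr, false_iff]
    rintro ⟨a, h, -⟩
    exact Sum.inr_ne_inl h

lemma min_has_outside {U : Type*} {H : SimpleGraph U} {C : Finset U}
    (h : IsMinVertexCover H ↑C) {c : U} (hc : c ∈ C) :
    ∃ u, H.Adj c u ∧ u ∉ C := by
  by_contra hcon
  push_neg at hcon
  refine h.2 (↑C \ {c}) (Set.sdiff_singleton_ssubset.mpr (by simpa using hc)) ?_
  intro a b hab
  rcases h.1 hab with ha | hb
  · by_cases hac : a = c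
    · subst hac
      have hb' : b ∈ C := hcon b hab
      exact Or.inr ⟨by simpa using hb', by simpa using (hab.ne).symm⟩
    · exact Or.inl ⟨ha, hac⟩
  · by_cases hbc : b = c
    · subst hbc
      have ha' : a ∈ C := hcon a hab.symm
      exact Or.inl ⟨by simpa using ha', by simpa using hab.ne⟩
    · exact Or.inr ⟨hb, hbc⟩

lemma min_of_outside {U : Type*} {H : SimpleGraph U} {C : Finset U}
    (hc : IsVertexCover H ↑C) (hout : ∀ c ∈ C, ∃ u, H.Adj c u ∧ u ∉ C) :
    IsMinVertexCover H ↑C := by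
  refine ⟨hc, fun D hD hDcov => ?_⟩
  obtain ⟨c, hcC, hcD⟩ := Set.exists_of_ssubset hD
  obtain ⟨u, hadj, huC⟩ := hout c (by simpa using hcC)
  rcases hDcov hadj with h | h
  · exact hcD h
  · exact huC (by simpa using hD.subset h)

end helpers

theorem statement3 {V ι K : Type*} [Fintype V] [Fintype ι] [Field K]
    (G : SimpleGraph V) (A : ι → Set V)
    (hA : ∀ a : V, ∃! i, a ∈ A i)
    (hclique : ∀ i, G.IsClique (A i))
    (lt : (V ⊕ ι) → (V ⊕ ι) → Prop)
    (hlt : IsStrictTotalOrder (V ⊕ ι) lt)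
    (hblock : ∀ i : ι, ∀ a ∈ A i, lt (Sum.inr i) (Sum.inl a))
    (hblocks1 : ∀ i j : ι, i ≠ j → ∀ a ∈ A i, ∀ b ∈ A j,
      (lt (Sum.inl a) (Sum.inl b) ↔ lt (Sum.inr i) (Sum.inr j)))
    (hblocks2 : ∀ i j : ι, i ≠ j → ∀ a ∈ A i,
      (lt (Sum.inl a) (Sum.inr j) ↔ lt (Sum.inr i) (Sum.inr j)))
    (C : Finset (V ⊕ ι)) (hC : IsMinVertexCover (cliqueWhisker G A) ↑C) :
    (Ideal.span { m : MvPolynomial (V ⊕ ι) K | ∃ D : Finset (V ⊕ ι),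
          IsMinVertexCover (cliqueWhisker G A) ↑D ∧ lexGT lt D C ∧
          m = ∏ x ∈ D, MvPolynomial.X x }).colon
        ((Ideal.span {∏ x ∈ C, (MvPolynomial.X x : MvPolynomial (V ⊕ ι) K)} :
          Ideal (MvPolynomial (V ⊕ ι) K)) : Set (MvPolynomial (V ⊕ ι) K))
      = Ideal.span (MvPolynomial.X ''
          (⋃ i : ι, ((cliqueWhisker G A).neighborSet (Sum.inr i) \ ↑C))) := by
  classical
  haveI := hlt
  have hirr : ∀ x : V ⊕ ι, ¬ lt x x := fun x => Std.Irrefl.irrefl x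
  have hasymm : ∀ x y : V ⊕ ι, lt x y → ¬ lt y x := fun x y h1 h2 =>
    hirr x (IsTrans.trans x y x h1 h2)
  have hCcov := hC.1
  set S : Set (V ⊕ ι) := {x | ∃ a : V, x = Sum.inl a ∧ Sum.inl a ∉ C} with hS
  have hTS : (⋃ i : ι, ((cliqueWhisker G A).neighborSet (Sum.inr i) \ ↑C)) = S := by
    ext x
    simp only [Set.mem_iUnion, Set.mem_diff, SimpleGraph.mem_neighborSet, hS,
      Set.mem_setOf_eq]
    constructor
    · rintro ⟨i, hadj, hxC⟩
      obtain ⟨a, rfl, ha⟩ := adj_inr_iff.mp hadj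
      exact ⟨a, rfl, by simpa using hxC⟩
    · rintro ⟨a, rfl, haC⟩
      obtain ⟨i, hi, -⟩ := hA a
      exact ⟨i, adj_inr_iff.mpr ⟨a, rfl, hi⟩, by simpa using haC⟩
  rw [hTS]
  set mC : MvPolynomial (V ⊕ ι) K := ∏ x ∈ C, MvPolynomial.X x with hmC
  set P : Ideal (MvPolynomial (V ⊕ ι) K) := Ideal.span (MvPolynomial.X '' S) with hP
  set φ : MvPolynomial (V ⊕ ι) K →ₐ[K] MvPolynomial (V ⊕ ι) K :=
    MvPolynomial.aeval (fun x => if x ∈ S then 0 else MvPolynomial.X x) with hφ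
  have hφX : ∀ x, φ (MvPolynomial.X x)
      = if x ∈ S then 0 else MvPolynomial.X x := by
    intro x; rw [hφ, MvPolynomial.aeval_X]
  have hkey : ∀ f : MvPolynomial (V ⊕ ι) K, f - φ f ∈ P := by
    intro f
    induction f using MvPolynomial.induction_on with
    | C a =>
      have : (MvPolynomial.C a : MvPolynomial (V ⊕ ι) K) - φ (MvPolynomial.C a) = 0 := by
        rw [hφ, MvPolynomial.aeval_C, MvPolynomial.algebraMap_eq, sub_self]
      rw [this]; exact Ideal.zero_mem _
    | add p q hp hq =>
      have : p + q - φ (p + q) = (p - φ p) + (q - φ q) := by rw [map_add]; ring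
      rw [this]; exact Ideal.add_mem _ hp hq
    | mul_X p n hp =>
      rw [map_mul, hφX]
      by_cases hn : n ∈ S
      · rw [if_pos hn]
        have : p * MvPolynomial.X n - φ p * 0 = p * MvPolynomial.X n := by ring
        rw [this]
        exact Ideal.mul_mem_left _ _ (Ideal.subset_span ⟨n, hn, rfl⟩)
      · rw [if_neg hn]
        have : p * MvPolynomial.X n - φ p * MvPolynomial.X n
            = (p - φ p) * MvPolynomial.X n := by ring
        rw [this]
        exact Ideal.mul_mem_right _ _ hp
  have hPle : P ≤ RingHom.ker φ := by
    rw [hP, Ideal.span_le]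
    rintro m ⟨x, hx, rfl⟩
    simp only [SetLike.mem_coe, RingHom.mem_ker]
    rw [hφX, if_pos hx]
  have hφmC : φ mC = mC := by
    rw [hmC, map_prod]
    refine Finset.prod_congr rfl fun c hcC => ?_
    rw [hφX, if_neg]
    rintro ⟨a, rfl, haC⟩
    exact haC hcC
  have hmC0 : mC ≠ 0 :=
    Finset.prod_ne_zero_iff.mpr fun c _ => MvPolynomial.X_ne_zero c
  -- the span of the bigger minimal-cover monomials is contained in P
  have hJleP : Ideal.span { m : MvPolynomial (V ⊕ ι) K | ∃ D : Finset (V ⊕ ι),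
      IsMinVertexCover (cliqueWhisker G A) ↑D ∧ lexGT lt D C ∧
      m = ∏ x ∈ D, MvPolynomial.X x } ≤ P := by
    rw [Ideal.span_le]
    rintro m ⟨D, hDmin, hDlex, rfl⟩
    obtain ⟨z, hzD, hzC, hz⟩ := hDlex
    cases z with
    | inr i =>
      exfalso
      have hAiC : ∀ b ∈ A i, Sum.inl b ∈ C := by
        intro b hb
        rcases hCcov (adj_inl_inr.mpr hb) with h | h
        · simpa using h
        · exact absurd (by simpa using h) hzC
      have hAiD : ∀ b ∈ A i, Sum.inl b ∈ D := fun b hb =>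
        (hz _ (hblock i b hb)).mpr (hAiC b hb)
      refine hDmin.2 (↑D \ {Sum.inr i})
        (Set.sdiff_singleton_ssubset.mpr (by simpa using hzD)) ?_
      intro x y hxy
      rcases hDmin.1 hxy with hx | hy
      · by_cases hxi : x = Sum.inr i
        · subst hxi
          obtain ⟨b, rfl, hb⟩ := adj_inr_iff.mp hxy
          exact Or.inr ⟨by simpa using hAiD b hb, by simp⟩
        · exact Or.inl ⟨hx, hxi⟩
      · by_cases hyi : y = Sum.inr i
        · subst hyi
          obtain ⟨b, rfl, hb⟩ := adj_inr_iff.mp hxy.symm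
          exact Or.inl ⟨by simpa using hAiD b hb, by simp⟩
        · exact Or.inr ⟨hy, hyi⟩
    | inl a =>
      have hsplit : (∏ x ∈ D, MvPolynomial.X x : MvPolynomial (V ⊕ ι) K)
          = MvPolynomial.X (Sum.inl a) * ∏ x ∈ D.erase (Sum.inl a), MvPolynomial.X x :=
        (Finset.mul_prod_erase _ _ hzD).symm
      rw [hsplit]
      exact Ideal.mul_mem_right _ _
        (Ideal.subset_span ⟨Sum.inl a, ⟨a, rfl, hzC⟩, rfl⟩)
  apply le_antisymm
  · -- colon ideal ⊆ P
    intro f hf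
    rw [Ideal.mem_colon_span_singleton] at hf
    have h0 : φ (f * mC) = 0 := by
      have := hPle (hJleP hf)
      rwa [RingHom.mem_ker] at this
    rw [map_mul, hφmC] at h0
    have hf0 : φ f = 0 := by
      rcases mul_eq_zero.mp h0 with h | h
      · exact h
      · exact absurd h hmC0
    have := hkey f
    rwa [hf0, sub_zero] at this
  · -- P ⊆ colon ideal
    rw [hP, Ideal.span_le]
    rintro m ⟨x, hxS, rfl⟩
    obtain ⟨a, rfl, haC⟩ := hxS
    obtain ⟨i, hai, -⟩ := hA a
    simp only [SetLike.mem_coe]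
    rw [Ideal.mem_colon_span_singleton]
    have hviC : Sum.inr i ∈ C := by
      rcases hCcov (adj_inl_inr.mpr hai) with h | h
      · exact absurd (by simpa using h) haC
      · simpa using h
    have hAiC : ∀ b ∈ A i, b ≠ a → Sum.inl b ∈ C := by
      intro b hb hba
      rcases hCcov (adj_inl_inl.mpr (hclique i hai hb (Ne.symm hba))) with h | h
      · exact absurd (by simpa using h) haC
      · simpa using h
    set D : Finset (V ⊕ ι) := insert (Sum.inl a) (C.erase (Sum.inr i)) with hD
    have hmemD : ∀ x, x ∈ D ↔ x = Sum.inl a ∨ (x ∈ C ∧ x ≠ Sum.inr i) := by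
      intro x
      simp only [hD, Finset.mem_insert, Finset.mem_erase]
      tauto
    have haD : Sum.inl a ∈ D := (hmemD _).mpr (Or.inl rfl)
    have hviD : Sum.inr i ∉ D := by
      intro h
      rcases (hmemD _).mp h with h' | ⟨-, h'⟩
      · exact Sum.inr_ne_inl h'
      · exact h' rfl
    -- D is a vertex cover
    have hDcov : IsVertexCover (cliqueWhisker G A) ↑D := by
      have key : ∀ b : V, ∀ j : ι, b ∈ A j → Sum.inl b ∈ D ∨ Sum.inr j ∈ D := by
        intro b j hbj
        by_cases hji : j = i
        · subst hji
          by_cases hba : b = a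
          · subst hba; exact Or.inl haD
          · exact Or.inl ((hmemD _).mpr (Or.inr ⟨hAiC b hbj hba, by simp⟩))
        · rcases hCcov (adj_inl_inr.mpr hbj) with h | h
          · exact Or.inl ((hmemD _).mpr (Or.inr ⟨by simpa using h, by simp⟩))
          · refine Or.inr ((hmemD _).mpr (Or.inr ⟨by simpa using h, ?_⟩))
            simpa using hji
      intro x y hxy
      cases x with
      | inl b =>
        cases y with
        | inl c =>
          rcases hCcov hxy with h | h
          · exact Or.inl (by
              simpa using (hmemD _).mpr (Or.inr ⟨by simpa using h, by simp⟩))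
          · exact Or.inr (by
              simpa using (hmemD _).mpr (Or.inr ⟨by simpa using h, by simp⟩))
        | inr j =>
          rcases key b j (adj_inl_inr.mp hxy) with h | h
          · exact Or.inl (by simpa using h)
          · exact Or.inr (by simpa using h)
      | inr j =>
        cases y with
        | inl b =>
          rcases key b j (adj_inl_inr.mp hxy.symm) with h | h
          · exact Or.inr (by simpa using h)
          · exact Or.inl (by simpa using h)
        | inr k => exact absurd hxy not_adj_inr_inr
    -- D is a minimal vertex cover
    have hDmin : IsMinVertexCover (cliqueWhisker G A) ↑D := by
      refine min_of_outside hDcov ?_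
      intro d hd
      rcases (hmemD _).mp hd with rfl | ⟨hdC, hdi⟩
      · exact ⟨Sum.inr i, adj_inl_inr.mpr hai, hviD⟩
      · obtain ⟨u, hadj, huC⟩ := min_has_outside hC hdC
        by_cases hua : u = Sum.inl a
        · subst hua
          cases d with
          | inr j =>
            exfalso
            obtain ⟨b, hb, hbA⟩ := adj_inr_iff.mp hadj
            have hba : b = a := Sum.inl.inj hb.symm
            subst hba
            obtain ⟨i₀, hi₀, huniq⟩ := hA b
            exact hdi (congrArg Sum.inr ((huniq j hbA).trans (huniq i hai).symm))
          | inl b =>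
            obtain ⟨j, hbj, -⟩ := hA b
            by_cases hji : j = i
            · rw [hji] at hbj
              exact ⟨Sum.inr i, adj_inl_inr.mpr hbj, hviD⟩
            · by_cases hvj : Sum.inr j ∈ C
              · obtain ⟨u', hadj', hu'C⟩ := min_has_outside hC hvj
                obtain ⟨c, rfl, hc⟩ := adj_inr_iff.mp hadj'
                have hcb : c ≠ b := fun h => hu'C (h ▸ hdC)
                refine ⟨Sum.inl c,
                  adj_inl_inl.mpr (hclique j hbj hc (Ne.symm hcb)), ?_⟩
                intro hcD
                rcases (hmemD _).mp hcD with h | ⟨h, -⟩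
                · have hca : c = a := Sum.inl.inj h
                  subst hca
                  obtain ⟨i₀, hi₀, huniq⟩ := hA c
                  exact hji ((huniq j hc).trans (huniq i hai).symm)
                · exact hu'C h
              · refine ⟨Sum.inr j, adj_inl_inr.mpr hbj, ?_⟩
                intro h
                rcases (hmemD _).mp h with h' | ⟨h', -⟩
                · exact Sum.inr_ne_inl h'
                · exact hvj h'
        · refine ⟨u, hadj, ?_⟩
          intro h
          rcases (hmemD _).mp h with h' | ⟨h', -⟩
          · exact hua h'
          · exact huC h'
    -- lexGT D C
    have hDlex : lexGT lt D C := by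
      refine ⟨Sum.inl a, haD, haC, fun y hy => ?_⟩
      have hya : y ≠ Sum.inl a := fun h => hirr _ (h ▸ hy)
      have hyi : y ≠ Sum.inr i := fun h => hasymm _ _ (hblock i a hai) (h ▸ hy)
      rw [hmemD y]
      constructor
      · rintro (h | ⟨h, -⟩)
        · exact absurd h hya
        · exact h
      · intro h
        exact Or.inr ⟨h, hyi⟩
    -- the product identity
    have haD' : Sum.inl a ∉ C.erase (Sum.inr i) := fun h =>
      haC (Finset.mem_of_mem_erase h)
    have hprod : (∏ x ∈ D, MvPolynomial.X x : MvPolynomial (V ⊕ ι) K)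
        * MvPolynomial.X (Sum.inr i) = MvPolynomial.X (Sum.inl a) * mC := by
      rw [hD, Finset.prod_insert haD', hmC,
        ← Finset.mul_prod_erase C (fun x => (MvPolynomial.X x : MvPolynomial (V ⊕ ι) K)) hviC]
      ring
    rw [← hprod]
    exact Ideal.mul_mem_right _ _ (Ideal.subset_span ⟨D, hDmin, hDlex, rfl⟩)

end PaperHS
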